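/- Fix d > 1, and let f, g : ℝ → [0,1] be measurable non-increasing solutions of the un-truncated cavity equation. Then for every t ∈ ℝ, the quantity x^{-(d-1)} ∫_{-x}^{∞} (y + x)^{d-1} (f(y - t) - g(y)) dy converges, as x → +∞, to Δ(t) := ∫_ℝ (f(y - t) - g(y)) dy. -/

import Mathlib

open MeasureTheory Set Filter

/-- The truncated cavity operator `T`. -/
noncomputable def T (d lam : ℝ) (f : ℝ → ℝ) : ℝ → ℝ :=
  fun x => Real.exp (-(d * ∫ y in (-x)..lam, (x + y) ^ (d - 1) * f y))

/-- `f` is the fixed point of the truncated cavity operator on `[-λ, λ]`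
(non-increasing and `[0,1]`-valued there), extended to `ℝ` by `1` on `(-∞, -λ]`
and `0` on `(λ, ∞)`. -/
def ExtFixedPoint (d lam : ℝ) (f : ℝ → ℝ) : Prop :=
  AntitoneOn f (Icc (-lam) lam) ∧
  (∀ x ∈ Icc (-lam) lam, f x ∈ Icc (0 : ℝ) 1) ∧
  (∀ x ≤ -lam, f x = 1) ∧ (∀ x > lam, f x = 0) ∧
  (∀ x ∈ Icc (-lam) lam, T d lam f x = f x)

/-- `f : ℝ → [0,1]` is a measurable solution of the un-truncated Mézard–Parisi
cavity equation `f(x) = exp(-d ∫_{-x}^∞ (x+y)^{d-1} f(y) dy)`, the integrals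
being (finite and) well-defined. -/
def SolvesCavity (d : ℝ) (f : ℝ → ℝ) : Prop :=
  Measurable f ∧ (∀ x : ℝ, f x ∈ Icc (0 : ℝ) 1) ∧
  (∀ x : ℝ, IntegrableOn (fun y => (x + y) ^ (d - 1) * f y) (Ioi (-x))) ∧
  (∀ x : ℝ, f x = Real.exp (-(d * ∫ y in Ioi (-x), (x + y) ^ (d - 1) * f y)))

lemma SolvesCavity.pos {d : ℝ} {f : ℝ → ℝ} (hf : SolvesCavity d f) (x : ℝ) : 0 < f x := by
  rw [hf.2.2.2 x]; exact Real.exp_pos _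

lemma rpow_superadd {a b p : ℝ} (ha : 0 ≤ a) (hb : 0 ≤ b) (hp : 1 ≤ p) :
    a ^ p + b ^ p ≤ (a + b) ^ p := by
  have h := NNReal.add_rpow_le_rpow_add a.toNNReal b.toNNReal hp
  rw [← NNReal.coe_le_coe] at h
  rwa [NNReal.coe_add, NNReal.coe_rpow, NNReal.coe_rpow, NNReal.coe_rpow,
    ← Real.toNNReal_add ha hb, Real.coe_toNNReal _ ha, Real.coe_toNNReal _ hb,
    Real.coe_toNNReal _ (by positivity)] at h

lemma decay_pos {d : ℝ} (hd : 1 < d) {f : ℝ → ℝ} (hf_anti : Antitone f)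
    (hf : SolvesCavity d f) {x : ℝ} (hx : 0 ≤ x) :
    f x ≤ Real.exp (-(f 0 * x ^ d)) := by
  obtain ⟨hmeas, hbnd, hint, heq⟩ := hf
  have hd0 : (0:ℝ) < d := by linarith
  have hc : 0 ≤ f 0 := (hbnd 0).1
  -- the constant-lower-bound function is integrable on `Ioc (-x) 0`
  have hmint : IntegrableOn (fun y => (x + y) ^ (d - 1) * f 0) (Ioc (-x) 0) := by
    apply Measure.integrableOn_of_bounded (M := x ^ (d-1) * f 0)
    · exact ((measure_Ioc_lt_top).ne)
    · exact (((Real.continuous_rpow_const (by linarith)).comp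
        (continuous_const.add continuous_id)).mul continuous_const).aestronglyMeasurable
    · filter_upwards [ae_restrict_mem measurableSet_Ioc] with y hy
      have h1 : 0 ≤ x + y := by linarith [hy.1]
      have h2 : x + y ≤ x := by linarith [hy.2]
      rw [Real.norm_eq_abs, abs_of_nonneg (mul_nonneg (Real.rpow_nonneg h1 _) hc)]
      exact mul_le_mul_of_nonneg_right (Real.rpow_le_rpow h1 h2 (by linarith)) hc
  have key : f 0 * (x ^ d / d) ≤ ∫ y in Ioi (-x), (x + y) ^ (d - 1) * f y := by
    have step1 : ∫ y in Ioc (-x) 0, (x + y) ^ (d - 1) * f y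
        ≤ ∫ y in Ioi (-x), (x + y) ^ (d - 1) * f y := by
      apply setIntegral_mono_set (hint x)
      · filter_upwards [ae_restrict_mem measurableSet_Ioi] with y hy
        exact mul_nonneg (Real.rpow_nonneg (by linarith [mem_Ioi.1 hy]) _) (hbnd y).1
      · exact HasSubset.Subset.eventuallyLE Ioc_subset_Ioi_self
    have step2 : ∫ y in Ioc (-x) 0, (x + y) ^ (d - 1) * f 0
        ≤ ∫ y in Ioc (-x) 0, (x + y) ^ (d - 1) * f y := by
      apply setIntegral_mono_on hmint ((hint x).mono_set Ioc_subset_Ioi_self)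
        measurableSet_Ioc
      intro y hy
      exact mul_le_mul_of_nonneg_left (hf_anti hy.2) (Real.rpow_nonneg (by linarith [hy.1]) _)
    have calc1 : ∫ y in Ioc (-x) 0, (x + y) ^ (d - 1) * f 0 = f 0 * (x ^ d / d) := by
      have hle : (-x : ℝ) ≤ 0 := by linarith
      rw [← intervalIntegral.integral_of_le hle]
      have : (∫ y in (-x)..0, (x + y) ^ (d - 1) * f 0)
          = (∫ y in (-x)..0, (x + y) ^ (d - 1)) * f 0 :=
        intervalIntegral.integral_mul_const _ _
      rw [this, intervalIntegral.integral_comp_add_left (fun u => u ^ (d-1)) x]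
      simp only [add_neg_cancel, add_zero]
      rw [integral_rpow (Or.inl (by linarith))]
      rw [sub_add_cancel, Real.zero_rpow (by positivity : d ≠ 0)]
      ring
    calc f 0 * (x ^ d / d) = ∫ y in Ioc (-x) 0, (x + y) ^ (d - 1) * f 0 := calc1.symm
      _ ≤ ∫ y in Ioc (-x) 0, (x + y) ^ (d - 1) * f y := step2
      _ ≤ ∫ y in Ioi (-x), (x + y) ^ (d - 1) * f y := step1
  rw [heq x]
  rw [Real.exp_le_exp]
  have := mul_le_mul_of_nonneg_left key (le_of_lt hd0)
  have heqd : d * (f 0 * (x ^ d / d)) = f 0 * x ^ d := by field_simp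
  linarith [this, heqd]


-- FTC package for the Gaussian-like antiderivative
lemma ftc_pack {d c x : ℝ} (hd : 1 < d) (hc : 0 < c) (hx : x ≤ 0) :
    IntegrableOn (fun u => (x + u) ^ (d - 1) * Real.exp (-(c * (x + u) ^ d))) (Ioi (-x)) ∧
    (∫ u in Ioi (-x), (x + u) ^ (d - 1) * Real.exp (-(c * (x + u) ^ d))) = (c * d)⁻¹ := by
  have hd0 : (0:ℝ) < d := by linarith
  set φ : ℝ → ℝ := fun u => -(c * d)⁻¹ * Real.exp (-(c * (x + u) ^ d)) with hφ
  set ψ : ℝ → ℝ := fun u => (x + u) ^ (d - 1) * Real.exp (-(c * (x + u) ^ d)) with hψ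
  have hcont : ContinuousWithinAt φ (Ici (-x)) (-x) := by
    apply ContinuousAt.continuousWithinAt
    apply ContinuousAt.mul continuousAt_const
    apply (Real.continuous_exp.continuousAt).comp
    apply ContinuousAt.neg
    apply ContinuousAt.mul continuousAt_const
    have h1 : ContinuousAt (fun u : ℝ => x + u) (-x) := by fun_prop
    have h2 : ContinuousAt (fun v : ℝ => v ^ d) (x + -x) :=
      Real.continuousAt_rpow_const _ _ (Or.inr (le_of_lt hd0))
    exact h2.comp h1
  have hderiv : ∀ u ∈ Ioi (-x), HasDerivAt φ (ψ u) u := by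
    intro u hu
    have hpos : 0 < x + u := by have := mem_Ioi.1 hu; linarith
    have h1 : HasDerivAt (fun u : ℝ => x + u) 1 u := (hasDerivAt_id u).const_add x
    have h2 : HasDerivAt (fun v : ℝ => v ^ d) (d * (x + u) ^ (d - 1)) (x + u) :=
      Real.hasDerivAt_rpow_const (Or.inl hpos.ne')
    have h3 : HasDerivAt (fun u : ℝ => (x + u) ^ d) (d * (x + u) ^ (d - 1) * 1) u :=
      h2.comp u h1
    have h4 : HasDerivAt (fun u : ℝ => -(c * (x + u) ^ d))
        (-(c * (d * (x + u) ^ (d - 1) * 1))) u := (h3.const_mul c).neg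
    have h5 := (h4.exp.const_mul (-(c * d)⁻¹))
    refine h5.congr_deriv ?_
    simp only [hψ]
    field_simp
  have g'pos : ∀ u ∈ Ioi (-x), 0 ≤ ψ u := by
    intro u hu
    have : (0:ℝ) ≤ x + u := by have := mem_Ioi.1 hu; linarith
    exact mul_nonneg (Real.rpow_nonneg this _) (Real.exp_pos _).le
  have hg : Tendsto φ atTop (nhds 0) := by
    have t1 : Tendsto (fun u : ℝ => (x + u) ^ d) atTop atTop :=
      (tendsto_rpow_atTop hd0).comp (tendsto_atTop_add_const_left atTop x tendsto_id)
    have t2 : Tendsto (fun u : ℝ => -(c * (x + u) ^ d)) atTop atBot := by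
      have := t1.const_mul_atTop_of_neg (show (-c) < 0 by linarith)
      simpa [neg_mul] using this
    have t3 : Tendsto (fun u : ℝ => Real.exp (-(c * (x + u) ^ d))) atTop (nhds 0) := by
      have := Real.tendsto_exp_atBot.comp t2
      simpa [Function.comp_def] using this
    have t4 := t3.const_mul (-(c * d)⁻¹)
    rw [hφ]
    simpa [mul_comm] using t4
  refine ⟨integrableOn_Ioi_deriv_of_nonneg hcont hderiv g'pos hg, ?_⟩
  rw [integral_Ioi_of_hasDerivAt_of_nonneg hcont hderiv g'pos hg]
  have hφx : φ (-x) = -(c * d)⁻¹ := by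
    simp [hφ, Real.zero_rpow (show d ≠ 0 by positivity)]
  rw [hφx]
  ring

lemma decay_neg {d : ℝ} (hd : 1 < d) {f : ℝ → ℝ} (hf_anti : Antitone f)
    (hf : SolvesCavity d f) {x : ℝ} (hx : x ≤ 0) :
    1 - f x ≤ (f 0)⁻¹ * Real.exp (-(f 0 * (-x) ^ d)) := by
  have hc : 0 < f 0 := hf.pos 0
  set c := f 0 with hcdef
  have hd0 : (0:ℝ) < d := by linarith
  obtain ⟨hmeas, hbnd, hint, heq⟩ := hf
  set I := ∫ y in Ioi (-x), (x + y) ^ (d - 1) * f y with hI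
  have stepA : 1 - f x ≤ d * I := by
    have h1 := Real.add_one_le_exp (-(d * I))
    rw [heq x]
    linarith
  obtain ⟨hpsi_int, hpsi_val⟩ := ftc_pack (d := d) (c := c) (x := x) hd hc hx
  have stepB : I ≤ (c * d)⁻¹ * Real.exp (-(c * (-x) ^ d)) := by
    set K := Real.exp (-(c * (-x) ^ d)) with hK
    have hKpos : 0 < K := Real.exp_pos _
    have hmono : I ≤ ∫ y in Ioi (-x),
        ((x + y) ^ (d - 1) * Real.exp (-(c * (x + y) ^ d))) * K := by
      apply setIntegral_mono_on (hint x) (hpsi_int.mul_const K) measurableSet_Ioi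
      intro y hy
      have hy' : -x < y := mem_Ioi.1 hy
      have hxy : 0 ≤ x + y := by linarith
      have hy0 : 0 ≤ y := by linarith
      have hfy : f y ≤ Real.exp (-(c * y ^ d)) :=
        decay_pos hd hf_anti ⟨hmeas, hbnd, hint, heq⟩ hy0
      have hsup : (x + y) ^ d + (-x) ^ d ≤ y ^ d := by
        have := rpow_superadd hxy (show (0:ℝ) ≤ -x by linarith) (le_of_lt hd)
        have hyd : x + y + -x = y := by ring
        rwa [hyd] at this
      have hexp : Real.exp (-(c * y ^ d))
          ≤ Real.exp (-(c * (x + y) ^ d)) * K := by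
        rw [hK, ← Real.exp_add]
        apply Real.exp_le_exp.2
        have := mul_le_mul_of_nonneg_left hsup (le_of_lt hc)
        nlinarith
      calc (x + y) ^ (d - 1) * f y
          ≤ (x + y) ^ (d - 1) * Real.exp (-(c * y ^ d)) :=
            mul_le_mul_of_nonneg_left hfy (Real.rpow_nonneg hxy _)
        _ ≤ (x + y) ^ (d - 1) * (Real.exp (-(c * (x + y) ^ d)) * K) :=
            mul_le_mul_of_nonneg_left hexp (Real.rpow_nonneg hxy _)
        _ = ((x + y) ^ (d - 1) * Real.exp (-(c * (x + y) ^ d))) * K := by ring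
    rw [integral_mul_const, hpsi_val] at hmono
    exact hmono
  calc 1 - f x ≤ d * I := stepA
    _ ≤ d * ((c * d)⁻¹ * Real.exp (-(c * (-x) ^ d))) :=
        mul_le_mul_of_nonneg_left stepB (le_of_lt hd0)
    _ = c⁻¹ * Real.exp (-(c * (-x) ^ d)) := by field_simp

lemma exp_bounds {d : ℝ} (hd : 1 < d) {f : ℝ → ℝ} (hf_anti : Antitone f)
    (hf : SolvesCavity d f) :
    ∃ M : ℝ, 0 < M ∧ (∀ z : ℝ, 0 ≤ z → f z ≤ M * Real.exp (-(d * z))) ∧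
      (∀ z : ℝ, z ≤ 0 → 1 - f z ≤ M * Real.exp (d * z)) := by
  have hc : 0 < f 0 := hf.pos 0
  set c := f 0 with hcdef
  have hd0 : (0:ℝ) < d := by linarith
  set z1 : ℝ := max 1 ((d / c) ^ (1 / (d - 1))) with hz1def
  have hz1pos : 0 < z1 := lt_of_lt_of_le one_pos (le_max_left _ _)
  have key : ∀ z : ℝ, z1 ≤ z → d * z ≤ c * z ^ d := by
    intro z hz
    have hz0 : 0 < z := lt_of_lt_of_le hz1pos hz
    have h1 : (d / c) ^ (1 / (d - 1)) ≤ z := le_trans (le_max_right _ _) hz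
    have h2 : d / c ≤ z ^ (d - 1) := by
      have hb : (0:ℝ) ≤ (d / c) ^ (1 / (d - 1)) := Real.rpow_nonneg (by positivity) _
      have := Real.rpow_le_rpow hb h1 (show (0:ℝ) ≤ d - 1 by linarith)
      rwa [← Real.rpow_mul (by positivity), one_div,
        inv_mul_cancel₀ (show d - 1 ≠ 0 by linarith), Real.rpow_one] at this
    have h3 : d ≤ c * z ^ (d - 1) := by
      rw [div_le_iff₀ hc] at h2; linarith [h2]
    have h4 : z ^ d = z ^ (d - 1) * z := by
      rw [← Real.rpow_add_one hz0.ne' (d - 1)]; ring_nf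
    calc d * z ≤ (c * z ^ (d - 1)) * z := by
          apply mul_le_mul_of_nonneg_right h3 hz0.le
      _ = c * z ^ d := by rw [h4]; ring
  refine ⟨max c⁻¹ 1 * Real.exp (d * z1), by positivity, ?_, ?_⟩
  · intro z hz
    rcases le_or_gt z1 z with h | h
    · have h1 : f z ≤ Real.exp (-(c * z ^ d)) := decay_pos hd hf_anti hf hz
      have h2 : Real.exp (-(c * z ^ d)) ≤ Real.exp (-(d * z)) :=
        Real.exp_le_exp.2 (by linarith [key z h])
      have h3 : (1:ℝ) ≤ max c⁻¹ 1 * Real.exp (d * z1) := by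
        have : (1:ℝ) ≤ Real.exp (d * z1) := Real.one_le_exp (by positivity)
        nlinarith [le_max_right c⁻¹ 1]
      calc f z ≤ Real.exp (-(d * z)) := le_trans h1 h2
        _ ≤ max c⁻¹ 1 * Real.exp (d * z1) * Real.exp (-(d * z)) := by
            nlinarith [Real.exp_pos (-(d * z))]
    · have h1 : f z ≤ 1 := (hf.2.1 z).2
      have h2 : (1:ℝ) ≤ Real.exp (d * z1) * Real.exp (-(d * z)) := by
        rw [← Real.exp_add]
        apply Real.one_le_exp
        nlinarith
      have h3 : (1:ℝ) ≤ max c⁻¹ 1 := le_max_right _ _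
      nlinarith [Real.exp_pos (d * z1), Real.exp_pos (-(d * z))]
  · intro z hz
    rcases le_or_gt z1 (-z) with h | h
    · have h1 : 1 - f z ≤ c⁻¹ * Real.exp (-(c * (-z) ^ d)) := decay_neg hd hf_anti hf hz
      have h2 : Real.exp (-(c * (-z) ^ d)) ≤ Real.exp (d * z) := by
        apply Real.exp_le_exp.2
        have := key (-z) h
        linarith
      have h4 : c⁻¹ ≤ max c⁻¹ 1 := le_max_left _ _
      have h5 : (1:ℝ) ≤ Real.exp (d * z1) := Real.one_le_exp (by positivity)
      have hcinv : (0:ℝ) < c⁻¹ := by positivity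
      calc 1 - f z ≤ c⁻¹ * Real.exp (d * z) := by
            nlinarith [Real.exp_pos (d * z), Real.exp_pos (-(c * (-z) ^ d))]
        _ ≤ max c⁻¹ 1 * Real.exp (d * z1) * Real.exp (d * z) := by
            have h6 : c⁻¹ ≤ max c⁻¹ 1 * Real.exp (d * z1) := by
              nlinarith [mul_nonneg (le_trans hcinv.le h4) (sub_nonneg.2 h5)]
            exact mul_le_mul_of_nonneg_right h6 (Real.exp_pos _).le
    · have h1 : 1 - f z ≤ 1 := by linarith [(hf.2.1 z).1]
      have h2 : (1:ℝ) ≤ Real.exp (d * z1) * Real.exp (d * z) := by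
        rw [← Real.exp_add]
        apply Real.one_le_exp
        nlinarith
      have h3 : (1:ℝ) ≤ max c⁻¹ 1 := le_max_right _ _
      nlinarith [Real.exp_pos (d * z1), Real.exp_pos (d * z)]

lemma diff_bound {d : ℝ} (hd : 1 < d) {f g : ℝ → ℝ} (hf_anti : Antitone f)
    (hg_anti : Antitone g) (hf : SolvesCavity d f) (hg : SolvesCavity d g) (t : ℝ) :
    ∃ N : ℝ, ∀ y : ℝ, |f (y - t) - g y| ≤ N * Real.exp (-(d * |y|)) := by
  obtain ⟨Mf, hMf, hf1, hf2⟩ := exp_bounds hd hf_anti hf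
  obtain ⟨Mg, hMg, hg1, hg2⟩ := exp_bounds hd hg_anti hg
  have hd0 : (0:ℝ) < d := by linarith
  set E := Real.exp (d * |t|) with hE
  have hE1 : (1:ℝ) ≤ E := Real.one_le_exp (by positivity)
  refine ⟨Mf * E + Mg + 2 * E, ?_⟩
  intro y
  have hfy01 := hf.2.1 (y - t)
  have hgy01 := hg.2.1 y
  have hexpy : (0:ℝ) < Real.exp (-(d * |y|)) := Real.exp_pos _
  rcases le_or_gt 0 y with hy0 | hy0
  · rcases le_or_gt t y with hty | hty
    · -- y ≥ 0, y ≥ t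
      have b1 : f (y - t) ≤ Mf * Real.exp (-(d * (y - t))) := hf1 _ (by linarith)
      have b2 : g y ≤ Mg * Real.exp (-(d * y)) := hg1 _ hy0
      have e1 : Real.exp (-(d * (y - t))) = Real.exp (d * t) * Real.exp (-(d * y)) := by
        rw [← Real.exp_add]; ring_nf
      have e2 : Real.exp (d * t) ≤ E := Real.exp_le_exp.2 (by
        have := le_abs_self t; nlinarith)
      have habs : |f (y - t) - g y| ≤ f (y - t) + g y := by
        rw [abs_sub_comm]
        calc |g y - f (y - t)| ≤ |g y| + |f (y - t)| := abs_sub _ _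
          _ = g y + f (y - t) := by
              rw [abs_of_nonneg hgy01.1, abs_of_nonneg hfy01.1]
          _ = f (y - t) + g y := by ring
      have hyabs : |y| = y := abs_of_nonneg hy0
      calc |f (y - t) - g y| ≤ f (y - t) + g y := habs
        _ ≤ Mf * (E * Real.exp (-(d * y))) + Mg * Real.exp (-(d * y)) := by
            rw [e1] at b1
            have : Mf * (Real.exp (d * t) * Real.exp (-(d * y)))
                ≤ Mf * (E * Real.exp (-(d * y))) := by
              apply mul_le_mul_of_nonneg_left _ hMf.le
              exact mul_le_mul_of_nonneg_right e2 (Real.exp_pos _).le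
            linarith
        _ ≤ (Mf * E + Mg + 2 * E) * Real.exp (-(d * |y|)) := by
            rw [hyabs]; nlinarith [Real.exp_pos (-(d * y))]
    · -- 0 ≤ y < t : middle region, |y| ≤ |t|
      have hyt : |y| ≤ |t| := by
        rw [abs_of_nonneg hy0, abs_of_pos (by linarith : (0:ℝ) < t)]; linarith
      have h2 : |f (y - t) - g y| ≤ 2 := by
        calc |f (y - t) - g y| ≤ |f (y - t)| + |g y| := abs_sub _ _
          _ ≤ 1 + 1 := by
              rw [abs_of_nonneg hfy01.1, abs_of_nonneg hgy01.1]
              exact add_le_add hfy01.2 hgy01.2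
          _ = 2 := by norm_num
      have h3 : (2:ℝ) ≤ 2 * E * Real.exp (-(d * |y|)) := by
        have h1e : (1:ℝ) ≤ E * Real.exp (-(d * |y|)) := by
          rw [hE, ← Real.exp_add]
          exact Real.one_le_exp (by nlinarith)
        nlinarith
      have h4 : 2 * E * Real.exp (-(d * |y|)) ≤ (Mf * E + Mg + 2 * E) * Real.exp (-(d * |y|)) := by
        nlinarith
      linarith
  · rcases le_or_gt y t with hty | hty
    · -- y < 0, y ≤ t
      have b1 : 1 - f (y - t) ≤ Mf * Real.exp (d * (y - t)) := hf2 _ (by linarith)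
      have b2 : 1 - g y ≤ Mg * Real.exp (d * y) := hg2 _ hy0.le
      have e2 : Real.exp (d * (y - t)) ≤ E * Real.exp (d * y) := by
        rw [hE, ← Real.exp_add]
        apply Real.exp_le_exp.2
        have := neg_abs_le t; nlinarith
      have hyabs : Real.exp (d * y) = Real.exp (-(d * |y|)) := by
        rw [abs_of_neg hy0]; ring_nf
      have habs : |f (y - t) - g y| ≤ (1 - f (y - t)) + (1 - g y) := by
        rw [abs_le]; constructor <;> nlinarith [hfy01.1, hfy01.2, hgy01.1, hgy01.2]
      calc |f (y - t) - g y| ≤ (1 - f (y - t)) + (1 - g y) := habs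
        _ ≤ Mf * (E * Real.exp (d * y)) + Mg * Real.exp (d * y) := by
            have : Mf * Real.exp (d * (y - t)) ≤ Mf * (E * Real.exp (d * y)) :=
              mul_le_mul_of_nonneg_left e2 hMf.le
            linarith
        _ ≤ (Mf * E + Mg + 2 * E) * Real.exp (-(d * |y|)) := by
            rw [← hyabs]; nlinarith [Real.exp_pos (d * y)]
    · -- t < y < 0 : middle region
      have hyt : |y| ≤ |t| := by
        rw [abs_of_neg hy0, abs_of_neg (by linarith : t < 0)]; linarith
      have h2 : |f (y - t) - g y| ≤ 2 := by
        calc |f (y - t) - g y| ≤ |f (y - t)| + |g y| := abs_sub _ _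
          _ ≤ 1 + 1 := by
              rw [abs_of_nonneg hfy01.1, abs_of_nonneg hgy01.1]
              exact add_le_add hfy01.2 hgy01.2
          _ = 2 := by norm_num
      have h3 : (2:ℝ) ≤ 2 * E * Real.exp (-(d * |y|)) := by
        have h1e : (1:ℝ) ≤ E * Real.exp (-(d * |y|)) := by
          rw [hE, ← Real.exp_add]
          exact Real.one_le_exp (by nlinarith)
        nlinarith
      have h4 : 2 * E * Real.exp (-(d * |y|)) ≤ (Mf * E + Mg + 2 * E) * Real.exp (-(d * |y|)) := by
        nlinarith
      linarith

lemma integrable_exp_neg_abs' : Integrable (fun y : ℝ => Real.exp (-|y|)) := by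
  have h1 : IntegrableOn (fun y : ℝ => Real.exp (-|y|)) (Ici 0) := by
    have h0 : IntegrableOn (fun y : ℝ => Real.exp (-1 * y)) (Ioi (0:ℝ)) :=
      exp_neg_integrableOn_Ioi 0 one_pos
    have h0' : IntegrableOn (fun y : ℝ => Real.exp (-|y|)) (Ioi 0) := by
      apply h0.congr_fun _ measurableSet_Ioi
      intro y hy
      show Real.exp (-1 * y) = Real.exp (-|y|)
      rw [abs_of_pos (mem_Ioi.1 hy)]; ring_nf
    rwa [integrableOn_Ici_iff_integrableOn_Ioi]
  have h2 : IntegrableOn (fun y : ℝ => Real.exp (-|y|)) (Iic 0) := by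
    have h_map : (volume.restrict (Ici (0:ℝ))).map Neg.neg = volume.restrict (Iic (0:ℝ)) := by
      conv => rhs; rw [← Measure.map_neg_eq_self (volume : Measure ℝ),
        measurableEmbedding_neg.restrict_map]
      simp
    rw [IntegrableOn, ← h_map, measurableEmbedding_neg.integrable_map_iff]
    apply h1.congr_fun _ measurableSet_Ici
    intro y _
    show Real.exp (-|y|) = Real.exp (-|(-y)|)
    rw [abs_neg]
  have := h2.union h1
  rw [Iic_union_Ici] at this
  exact integrableOn_univ.mp this

lemma main_limit (d : ℝ) (hd : 1 < d) (h : ℝ → ℝ) (hm : Measurable h)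
    (N : ℝ) (hb : ∀ y : ℝ, |h y| ≤ N * Real.exp (-(d * |y|))) :
    Tendsto (fun x : ℝ => (∫ y in Ioi (-x), (y + x) ^ (d - 1) * h y) / x ^ (d - 1))
      atTop (nhds (∫ y : ℝ, h y)) := by
  have hd0 : (0:ℝ) < d := by linarith
  have hN : 0 ≤ N := by
    have := hb 0
    simp at this
    exact le_trans (abs_nonneg _) this
  set F : ℝ → ℝ → ℝ := fun x => (Ioi (-x)).indicator
    (fun y => ((y + x) / x) ^ (d - 1) * h y) with hF
  have key : Tendsto (fun x : ℝ => ∫ y : ℝ, F x y) atTop (nhds (∫ y : ℝ, h y)) := by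
    apply tendsto_integral_filter_of_dominated_convergence
      (bound := fun y => N * Real.exp (-|y|))
    · filter_upwards with x
      apply AEStronglyMeasurable.indicator _ measurableSet_Ioi
      exact (((Real.continuous_rpow_const (by linarith : (0:ℝ) ≤ d - 1)).comp
        ((continuous_id.add continuous_const).div_const x)).measurable.mul hm).aestronglyMeasurable
    · filter_upwards [eventually_ge_atTop (1:ℝ)] with x hx1
      filter_upwards with y
      by_cases hy : y ∈ Ioi (-x)
      · simp only [hF]
        rw [indicator_of_mem hy]
        have hy' : -x < y := mem_Ioi.1 hy
        have hx0 : (0:ℝ) < x := lt_of_lt_of_le one_pos hx1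
        have hq0 : 0 ≤ (y + x) / x := div_nonneg (by linarith) hx0.le
        have hq1 : (y + x) / x ≤ 1 + |y| := by
          rw [div_le_iff₀ hx0]
          have : y ≤ x * |y| := by
            rcases le_or_gt 0 y with h0 | h0
            · calc y = 1 * y := (one_mul y).symm
                _ ≤ x * y := mul_le_mul_of_nonneg_right hx1 h0
                _ = x * |y| := by rw [abs_of_nonneg h0]
            · have : 0 ≤ x * |y| := mul_nonneg hx0.le (abs_nonneg y)
              linarith
          nlinarith [abs_nonneg y]
        have hr1 : ((y + x) / x) ^ (d - 1) ≤ (1 + |y|) ^ (d - 1) :=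
          Real.rpow_le_rpow hq0 hq1 (by linarith)
        have hr2 : (1 + |y|) ^ (d - 1) ≤ Real.exp ((d - 1) * |y|) := by
          have hb1 : 1 + |y| ≤ Real.exp |y| := by
            have := Real.add_one_le_exp |y|; linarith
          calc (1 + |y|) ^ (d - 1) ≤ (Real.exp |y|) ^ (d - 1) :=
              Real.rpow_le_rpow (by positivity) hb1 (by linarith)
            _ = Real.exp (|y| * (d - 1)) := (Real.exp_mul _ _).symm
            _ = Real.exp ((d - 1) * |y|) := by ring_nf
        rw [Real.norm_eq_abs, abs_mul,
          abs_of_nonneg (Real.rpow_nonneg hq0 _)]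
        calc ((y + x) / x) ^ (d - 1) * |h y|
            ≤ Real.exp ((d - 1) * |y|) * (N * Real.exp (-(d * |y|))) := by
              apply mul_le_mul (le_trans hr1 hr2) (hb y) (abs_nonneg _)
              positivity
          _ = N * Real.exp (-|y|) := by
              rw [mul_comm, mul_assoc, ← Real.exp_add]
              ring_nf
      · simp only [hF]
        rw [indicator_of_notMem hy]
        simp only [norm_zero]
        positivity
    · exact (integrable_exp_neg_abs'.const_mul N)
    · filter_upwards with y
      have ev : (fun x : ℝ => F x y) =ᶠ[atTop]
          (fun x : ℝ => ((y + x) / x) ^ (d - 1) * h y) := by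
        filter_upwards [eventually_gt_atTop (|y| + 1)] with x hx
        simp only [hF]
        rw [indicator_of_mem]
        exact mem_Ioi.2 (by have := neg_abs_le y; linarith)
      have t1 : Tendsto (fun x : ℝ => (y + x) / x) atTop (nhds 1) := by
        have heq : (fun x : ℝ => y * x⁻¹ + 1) =ᶠ[atTop] fun x : ℝ => (y + x) / x := by
          filter_upwards [eventually_gt_atTop (0:ℝ)] with x hx
          field_simp
        have t0 : Tendsto (fun x : ℝ => y * x⁻¹ + 1) atTop (nhds (y * 0 + 1)) :=
          (tendsto_inv_atTop_zero.const_mul y).add_const 1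
        have := t0.congr' heq
        simpa using this
      have t2 : Tendsto (fun x : ℝ => ((y + x) / x) ^ (d - 1)) atTop (nhds 1) := by
        have hc : ContinuousAt (fun v : ℝ => v ^ (d - 1)) 1 :=
          Real.continuousAt_rpow_const 1 (d - 1) (Or.inl one_ne_zero)
        have := hc.tendsto.comp t1
        simpa [Real.one_rpow, Function.comp_def] using this
      have t3 := t2.mul_const (h y)
      rw [one_mul] at t3
      exact t3.congr' ev.symm
  apply Tendsto.congr' _ key
  filter_upwards [eventually_ge_atTop (1:ℝ)] with x hx
  have hx0 : (0:ℝ) < x := lt_of_lt_of_le one_pos hx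
  rw [hF, integral_indicator measurableSet_Ioi]
  have hcong : ∫ y in Ioi (-x), ((y + x) / x) ^ (d - 1) * h y
      = ∫ y in Ioi (-x), ((y + x) ^ (d - 1) * h y) / x ^ (d - 1) := by
    apply setIntegral_congr_fun measurableSet_Ioi
    intro y hy
    have hy' : -x < y := mem_Ioi.1 hy
    show ((y + x) / x) ^ (d - 1) * h y = ((y + x) ^ (d - 1) * h y) / x ^ (d - 1)
    rw [Real.div_rpow (by linarith : (0:ℝ) ≤ y + x) hx0.le]
    ring
  rw [hcong, integral_div]

/-- for two non-increasing solutions `f, g` and every `t`,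
`x^{-(d-1)} ∫_{-x}^∞ (y+x)^{d-1} (f(y-t) - g(y)) dy → Δ(t)` as `x → +∞`. -/
theorem cavity_shift_functional_limit (d : ℝ) (hd : 1 < d)
    (f g : ℝ → ℝ) (hf_anti : Antitone f) (hg_anti : Antitone g)
    (hf : SolvesCavity d f) (hg : SolvesCavity d g) :
    ∀ t : ℝ,
      Tendsto
        (fun x : ℝ =>
          (∫ y in Ioi (-x), (y + x) ^ (d - 1) * (f (y - t) - g y)) / x ^ (d - 1))
        atTop (nhds (∫ y : ℝ, (f (y - t) - g y))) := by
  intro t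
  have hm : Measurable fun y => f (y - t) - g y :=
    (hf.1.comp (measurable_id.sub_const t)).sub hg.1
  obtain ⟨N, hN⟩ := diff_bound hd hf_anti hg_anti hf hg t
  exact main_limit d hd _ hm N hN
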